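/- Let f : ℝ^n → ℝ be continuously differentiable, C ∈ ℝ with f(x) + C > 0 for all x, q₀(x) = √(f(x) + C), L ∈ ℝ^{n×n} symmetric, M ∈ ℝ^{n×n}, and let (φ, q) : [0, T] → ℝ^n × ℝ be continuously differentiable with φ'(t) = −M μ(t) and q'(t) = ⟨∇q₀(φ(t)), φ'(t)⟩, where μ(t) = Lφ(t) + 2q(t)∇q₀(φ(t)). Then the quadratized energy E(t) = (1/2)⟨φ(t), Lφ(t)⟩ + q(t)² − C satisfies E'(t) = −⟨μ(t), Mμ(t)⟩ for all t; in particular, if M is positive semidefinite, E is nonincreasing. -/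

import Mathlib

open scoped RealInnerProductSpace
open Matrix

noncomputable section

abbrev Vec (n : ℕ) := EuclideanSpace ℝ (Fin n)

/-- Action of a matrix on a Euclidean vector. -/
def mv {n : ℕ} (A : Matrix (Fin n) (Fin n) ℝ) (x : Vec n) : Vec n :=
  Matrix.toEuclideanLin A x


lemma inner_mv {n : ℕ} (A : Matrix (Fin n) (Fin n) ℝ) (x y : Vec n) :
    ⟪x, mv A y⟫ = x ⬝ᵥ (A *ᵥ ⇑y) := by
  simp only [mv, Matrix.toEuclideanLin_apply, PiLp.inner_apply, dotProduct, RCLike.inner_apply,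
    conj_trivial]
  exact Finset.sum_congr rfl fun i _ => mul_comm _ _

lemma mv_inner {n : ℕ} (A : Matrix (Fin n) (Fin n) ℝ) (x y : Vec n) :
    ⟪mv A x, y⟫ = (A *ᵥ ⇑x) ⬝ᵥ ⇑y := by
  simp only [mv, Matrix.toEuclideanLin_apply, PiLp.inner_apply, dotProduct, RCLike.inner_apply,
    conj_trivial]
  simp only [mul_comm]

lemma mv_symm {n : ℕ} {L : Matrix (Fin n) (Fin n) ℝ} (hL : L.IsSymm) (x y : Vec n) :
    ⟪x, mv L y⟫ = ⟪mv L x, y⟫ := by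
  rw [inner_mv, mv_inner, Matrix.dotProduct_mulVec, ← Matrix.mulVec_transpose, hL.eq]

lemma hasDerivAt_mv {n : ℕ} (A : Matrix (Fin n) (Fin n) ℝ) {φ : ℝ → Vec n} {v : Vec n} {t : ℝ}
    (h : HasDerivAt φ v t) : HasDerivAt (fun s => mv A (φ s)) (mv A v) t :=
  (LinearMap.toContinuousLinearMap (Matrix.toEuclideanLin A)).hasFDerivAt.comp_hasDerivAt t h

/-- energy dissipation of the EQ reformulated system:
if `(φ, q)` solves `φ' = −Mμ`, `q' = ⟨∇q₀(φ), φ'⟩` with `μ = Lφ + 2q∇q₀(φ)` and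
`q₀ = √(f + C)`, then the quadratized energy `E(t) = (1/2)⟨φ, Lφ⟩ + q² − C` satisfies
`E'(t) = −⟨μ, Mμ⟩`; in particular, if `M` is positive semidefinite, `E` is nonincreasing. -/
theorem eq_energy_dissipation {n : ℕ}
    (f : Vec n → ℝ) (hf : ContDiff ℝ 1 f)
    (C : ℝ) (hfC : ∀ x : Vec n, 0 < f x + C)
    (q₀ : Vec n → ℝ) (hq₀ : ∀ x : Vec n, q₀ x = Real.sqrt (f x + C))
    (L M : Matrix (Fin n) (Fin n) ℝ) (hL : L.IsSymm)
    (T : ℝ) (φ : ℝ → Vec n) (q : ℝ → ℝ)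
    (hφ : ∀ t ∈ Set.Icc (0 : ℝ) T,
      HasDerivAt φ (-(mv M (mv L (φ t) + (2 * q t) • gradient q₀ (φ t)))) t)
    (hq : ∀ t ∈ Set.Icc (0 : ℝ) T,
      HasDerivAt q
        ⟪gradient q₀ (φ t), -(mv M (mv L (φ t) + (2 * q t) • gradient q₀ (φ t)))⟫ t) :
    (∀ t ∈ Set.Icc (0 : ℝ) T,
      HasDerivAt (fun s => (1 / 2 : ℝ) * ⟪φ s, mv L (φ s)⟫ + (q s) ^ 2 - C)
        (-⟪mv L (φ t) + (2 * q t) • gradient q₀ (φ t),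
            mv M (mv L (φ t) + (2 * q t) • gradient q₀ (φ t))⟫) t) ∧
    (M.PosSemidef →
      AntitoneOn (fun s => (1 / 2 : ℝ) * ⟪φ s, mv L (φ s)⟫ + (q s) ^ 2 - C)
        (Set.Icc (0 : ℝ) T)) := by
  have key : ∀ t ∈ Set.Icc (0 : ℝ) T,
      HasDerivAt (fun s => (1 / 2 : ℝ) * ⟪φ s, mv L (φ s)⟫ + (q s) ^ 2 - C)
        (-⟪mv L (φ t) + (2 * q t) • gradient q₀ (φ t),
            mv M (mv L (φ t) + (2 * q t) • gradient q₀ (φ t))⟫) t := by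
    intro t ht
    set μ := mv L (φ t) + (2 * q t) • gradient q₀ (φ t) with hμ
    set v := -(mv M μ) with hv
    have h1 : HasDerivAt (fun s => ⟪φ s, mv L (φ s)⟫)
        (⟪φ t, mv L v⟫ + ⟪v, mv L (φ t)⟫) t :=
      (hφ t ht).inner ℝ (hasDerivAt_mv L (hφ t ht))
    have h2 : HasDerivAt (fun s => q s ^ 2)
        (2 * q t * ⟪gradient q₀ (φ t), v⟫) t := by
      have := (hq t ht).pow 2
      refine this.congr_deriv ?_
      push_cast
      ring
    have h3 := ((h1.const_mul (1/2 : ℝ)).add h2).sub_const C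
    refine h3.congr_deriv ?_
    have hc : ⟪v, mv L (φ t)⟫ = ⟪mv L (φ t), v⟫ := real_inner_comm _ _
    rw [mv_symm hL (φ t) v, hc]
    simp only [hv, hμ, inner_neg_right, inner_add_left, real_inner_smul_left]
    ring
  refine ⟨key, fun hM => ?_⟩
  apply antitoneOn_of_deriv_nonpos (convex_Icc 0 T)
  · exact fun x hx => (key x hx).continuousAt.continuousWithinAt
  · rw [interior_Icc]
    exact fun x hx =>
      (key x (Set.Ioo_subset_Icc_self hx)).differentiableAt.differentiableWithinAt
  · rw [interior_Icc]
    intro x hx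
    rw [(key x (Set.Ioo_subset_Icc_self hx)).deriv]
    have h0 := hM.dotProduct_mulVec_nonneg (WithLp.ofLp (mv L (φ x) + (2 * q x) • gradient q₀ (φ x)))
    rw [neg_nonpos, inner_mv]
    simpa using h0


end
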